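/- With the notation of the previous setting, for all r, r' > 0 and s > 0 the estimate ‖φ±(r'D₁ + sD₂) − φ±(rD₁ + sD₂)‖ ≤ |r − r'| / r holds, where φ±(t) = (t ± i)⁻¹. Consequently the map (r,s) ↦ φ±(rD₁ + sD₂) is continuous in operator norm on (0,∞)². -/

import Mathlib

open Complex

section Aux

section Aux

variable {A : Type*} [CStarAlgebra A]

lemma phi_contOn {c : ℂ} (hc : c.im ≠ 0) {T : A} (hT : IsSelfAdjoint T) :
    ContinuousOn (fun z : ℂ => (z + c)⁻¹) (spectrum ℂ T) := by
  intro z hz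
  have hzim : z.im = 0 := hT.im_eq_zero_of_mem_spectrum hz
  have hne : z + c ≠ 0 := by
    intro h
    have : (z + c).im = 0 := by rw [h]; simp
    simp [Complex.add_im, hzim] at this
    exact hc this
  exact ((continuous_id.add continuous_const).continuousAt.inv₀ hne).continuousWithinAt

lemma abs_le_abs_add {c : ℂ} (hcre : c.re = 0) (hcim : |c.im| = 1) {z : ℂ} (hzim : z.im = 0) :
    1 ≤ ‖z + c‖ ∧ ‖z‖ ≤ ‖z + c‖ := by
  constructor
  · calc 1 = |(z + c).im| := by simp [Complex.add_im, hzim, hcim]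
    _ ≤ ‖z + c‖ := by exact Complex.abs_im_le_norm _
  · have h1 : ‖z‖ = |z.re| := by
      rw [Complex.norm_def, Complex.normSq_apply, hzim]
      simp [← Real.sqrt_sq_eq_abs, sq]
    have h2 : ‖z + c‖ = Real.sqrt (z.re ^ 2 + 1) := by
      rw [Complex.norm_def, Complex.normSq_apply]
      simp only [Complex.add_re, Complex.add_im, hzim, hcre, zero_add, add_zero]
      congr 1
      have : c.im ^ 2 = 1 := by rw [← _root_.sq_abs c.im, hcim]; norm_num
      nlinarith [sq (z.re)]
    rw [h1, h2, ← Real.sqrt_sq_eq_abs]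
    apply Real.sqrt_le_sqrt; nlinarith

variable {c : ℂ} (hcre : c.re = 0) (hcim : |c.im| = 1)

lemma hc_im_ne (hcim : |c.im| = 1) : c.im ≠ 0 := by
  intro h; rw [h] at hcim; simp at hcim

include hcre hcim in
lemma norm_R_le_one {T : A} (hT : IsSelfAdjoint T) :
    ‖cfc (fun z : ℂ => (z + c)⁻¹) T‖ ≤ 1 := by
  apply norm_cfc_le zero_le_one
  intro z hz
  have hzim : z.im = 0 := hT.im_eq_zero_of_mem_spectrum hz
  have h1 := (abs_le_abs_add hcre hcim hzim).1
  rw [norm_inv]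
  exact inv_le_one_of_one_le₀ h1

include hcim in
lemma cfc_resolvent_right {T : A} (hT : IsSelfAdjoint T) :
    (T + algebraMap ℂ A c) * cfc (fun z : ℂ => (z + c)⁻¹) T = 1 := by
  have hn : IsStarNormal T := hT.isStarNormal
  have hco := phi_contOn (hc_im_ne hcim) hT
  have h1 : T + algebraMap ℂ A c = cfc (fun z : ℂ => z + c) T := by
    rw [cfc_add (a := T) (fun z => z) (fun _ => c), cfc_id' ℂ T, cfc_const c T]
  rw [h1, ← cfc_mul _ _ T (by fun_prop) hco]
  rw [cfc_congr (g := fun _ : ℂ => (1 : ℂ)) ?_, cfc_const_one ℂ T]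
  intro z hz
  have hzim : z.im = 0 := hT.im_eq_zero_of_mem_spectrum hz
  have hne : z + c ≠ 0 := by
    intro h
    have : (z + c).im = 0 := by rw [h]; simp
    simp [Complex.add_im, hzim] at this
    exact hc_im_ne hcim this
  simp [mul_inv_cancel₀ hne]

include hcim in
lemma cfc_resolvent_left {T : A} (hT : IsSelfAdjoint T) :
    cfc (fun z : ℂ => (z + c)⁻¹) T * (T + algebraMap ℂ A c) = 1 := by
  have hn : IsStarNormal T := hT.isStarNormal
  have hco := phi_contOn (hc_im_ne hcim) hT
  have h1 : T + algebraMap ℂ A c = cfc (fun z : ℂ => z + c) T := by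
    rw [cfc_add (a := T) (fun z => z) (fun _ => c), cfc_id' ℂ T, cfc_const c T]
  rw [h1, ← cfc_mul _ _ T hco (by fun_prop)]
  rw [cfc_congr (g := fun _ : ℂ => (1 : ℂ)) ?_, cfc_const_one ℂ T]
  intro z hz
  have hzim : z.im = 0 := hT.im_eq_zero_of_mem_spectrum hz
  have hne : z + c ≠ 0 := by
    intro h
    have : (z + c).im = 0 := by rw [h]; simp
    simp [Complex.add_im, hzim] at this
    exact hc_im_ne hcim this
  simp [inv_mul_cancel₀ hne]

include hcim in
lemma resolvent_identity {T T' : A} (hT : IsSelfAdjoint T) (hT' : IsSelfAdjoint T') :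
    cfc (fun z : ℂ => (z + c)⁻¹) T' - cfc (fun z : ℂ => (z + c)⁻¹) T
      = cfc (fun z : ℂ => (z + c)⁻¹) T' * (T - T') * cfc (fun z : ℂ => (z + c)⁻¹) T := by
  set R := cfc (fun z : ℂ => (z + c)⁻¹) T
  set R' := cfc (fun z : ℂ => (z + c)⁻¹) T'
  have h1 : (T + algebraMap ℂ A c) * R = 1 := cfc_resolvent_right hcim hT
  have h2 : R' * (T' + algebraMap ℂ A c) = 1 := cfc_resolvent_left hcim hT'
  have key : R' * (T - T') * R
      = R' * ((T + algebraMap ℂ A c) * R) - (R' * (T' + algebraMap ℂ A c)) * R := by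
    noncomm_ring
  rw [key, h1, h2, mul_one, one_mul]

include hcre hcim in
lemma norm_mul_resolvent_le_one [PartialOrder A] [StarOrderedRing A] {B T : A} (hB : IsSelfAdjoint B) (hT : IsSelfAdjoint T)
    (hle : B ^ 2 ≤ T ^ 2) :
    ‖B * cfc (fun z : ℂ => (z + c)⁻¹) T‖ ≤ 1 := by
  have hn : IsStarNormal T := hT.isStarNormal
  have hco := phi_contOn (hc_im_ne hcim) hT
  set R := cfc (fun z : ℂ => (z + c)⁻¹) T with hR
  have hstar : star (B * R) * (B * R) = star R * B ^ 2 * R := by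
    rw [star_mul, hB.star_eq]; noncomm_ring
  have hpos : (0 : A) ≤ star R * B ^ 2 * R := by
    rw [← hstar]; exact star_mul_self_nonneg _
  have hle2 : star R * B ^ 2 * R ≤ star R * T ^ 2 * R := star_left_conjugate_le_conjugate hle R
  have hnorm1 : ‖star R * B ^ 2 * R‖ ≤ ‖star R * T ^ 2 * R‖ :=
    CStarAlgebra.norm_le_norm_of_nonneg_of_le hpos hle2
  have hcstar : ContinuousOn (fun z : ℂ => star ((z + c)⁻¹)) (spectrum ℂ T) :=
    continuous_star.comp_continuousOn hco
  have hcfc : star R * T ^ 2 * R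
      = cfc (fun z : ℂ => star ((z + c)⁻¹) * z ^ 2 * (z + c)⁻¹) T := by
    rw [cfc_mul (fun z : ℂ => star ((z + c)⁻¹) * z ^ 2) (fun z : ℂ => (z + c)⁻¹) T
        (hcstar.mul (by fun_prop)) hco,
      cfc_mul (fun z : ℂ => star ((z + c)⁻¹)) (fun z : ℂ => z ^ 2) T hcstar (by fun_prop),
      cfc_star (fun z : ℂ => (z + c)⁻¹) T, cfc_pow_id T 2]
  have hnorm2 : ‖star R * T ^ 2 * R‖ ≤ 1 := by
    rw [hcfc]
    apply norm_cfc_le zero_le_one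
    intro z hz
    have hzim : z.im = 0 := hT.im_eq_zero_of_mem_spectrum hz
    obtain ⟨ha1, ha2⟩ := abs_le_abs_add hcre hcim hzim
    have h0 : (0:ℝ) < ‖z + c‖ := lt_of_lt_of_le one_pos ha1
    simp only [norm_mul, norm_star, norm_inv, norm_pow]
    rw [show ‖z + c‖⁻¹ * ‖z‖ ^ 2 * ‖z + c‖⁻¹ = (‖z‖ / ‖z + c‖) ^ 2 by ring]
    apply pow_le_one₀ (by positivity)
    exact div_le_one_of_le₀ ha2 (norm_nonneg _)
  have hsq : ‖B * R‖ * ‖B * R‖ ≤ 1 := by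
    calc ‖B * R‖ * ‖B * R‖ = ‖star (B * R) * (B * R)‖ := (CStarRing.norm_star_mul_self).symm
    _ = ‖star R * B ^ 2 * R‖ := by rw [hstar]
    _ ≤ 1 := hnorm1.trans hnorm2
  nlinarith [norm_nonneg (B * R)]

lemma main_est {c : ℂ} (hcre : c.re = 0) (hcim : |c.im| = 1)
    [PartialOrder A] [StarOrderedRing A]
    (D₁ D₂ : A) (h₁ : IsSelfAdjoint D₁) (h₂ : IsSelfAdjoint D₂)
    (hsq : ∀ r s : ℝ, (r • D₁ + s • D₂) ^ 2 = (r ^ 2) • D₁ ^ 2 + (s ^ 2) • D₂ ^ 2)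
    {r r' s : ℝ} (hr : 0 < r) (hr' : 0 < r') (hs : 0 < s) :
    ‖cfc (fun z : ℂ => (z + c)⁻¹) (r' • D₁ + s • D₂)
      - cfc (fun z : ℂ => (z + c)⁻¹) (r • D₁ + s • D₂)‖ ≤ |r - r'| / r := by
  set T : A := r • D₁ + s • D₂ with hTdef
  set T' : A := r' • D₁ + s • D₂ with hT'def
  have hTsa : IsSelfAdjoint T := (IsSelfAdjoint.smul (star_trivial r) h₁).add (IsSelfAdjoint.smul (star_trivial s) h₂)
  have hT'sa : IsSelfAdjoint T' := (IsSelfAdjoint.smul (star_trivial r') h₁).add (IsSelfAdjoint.smul (star_trivial s) h₂)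
  set R : A := cfc (fun z : ℂ => (z + c)⁻¹) T with hRdef
  set R' : A := cfc (fun z : ℂ => (z + c)⁻¹) T' with hR'def
  have hdiff : T - T' = (r - r') • D₁ := by
    rw [hTdef, hT'def, sub_smul]; abel
  have hBsq : (r • D₁) ^ 2 ≤ T ^ 2 := by
    rw [← sub_nonneg]
    have e : T ^ 2 - (r • D₁) ^ 2 = (s • D₂) ^ 2 := by
      rw [hTdef, hsq r s, smul_pow, smul_pow]; abel
    have h0 := star_mul_self_nonneg (s • D₂)
    rw [(IsSelfAdjoint.smul (star_trivial s) h₂).star_eq] at h0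
    rw [e, sq (s • D₂)]
    exact h0
  have hres := resolvent_identity hcim hTsa hT'sa
  have e1 : R' - R = (r - r') • (R' * D₁ * R) := by
    rw [hres, hdiff, mul_smul_comm, smul_mul_assoc]
  have e2 : R' * D₁ * R = r⁻¹ • (R' * (r • D₁) * R) := by
    conv_lhs => rw [← inv_smul_smul₀ (ne_of_gt hr) D₁]
    rw [mul_smul_comm, smul_mul_assoc]
  have hb1 : ‖R'‖ ≤ 1 := norm_R_le_one hcre hcim hT'sa
  have hb2 : ‖(r • D₁) * R‖ ≤ 1 :=
    norm_mul_resolvent_le_one hcre hcim (IsSelfAdjoint.smul (star_trivial r) h₁) hTsa hBsq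
  have hb3 : ‖R' * (r • D₁) * R‖ ≤ 1 := by
    rw [mul_assoc]
    calc ‖R' * ((r • D₁) * R)‖ ≤ ‖R'‖ * ‖(r • D₁) * R‖ := norm_mul_le _ _
    _ ≤ 1 * 1 := by
        apply mul_le_mul hb1 hb2 (norm_nonneg _) zero_le_one
    _ = 1 := one_mul 1
  calc ‖R' - R‖ = |r - r'| * (r⁻¹ * ‖R' * (r • D₁) * R‖) := by
        rw [e1, e2, norm_smul, norm_smul, Real.norm_eq_abs, Real.norm_eq_abs,
          abs_of_pos (inv_pos.mpr hr)]
  _ ≤ |r - r'| * (r⁻¹ * 1) := by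
        apply mul_le_mul_of_nonneg_left _ (abs_nonneg _)
        exact mul_le_mul_of_nonneg_left hb3 (le_of_lt (inv_pos.mpr hr))
  _ = |r - r'| / r := by rw [mul_one, div_eq_mul_inv]


end Aux

/-- For self-adjoint `D₁`, `D₂` which graded-anticommute, so that
`(rD₁ + sD₂)² = r²D₁² + s²D₂²`, the resolvents `φ±(rD₁ + sD₂)` with `φ±(t) = (t ± i)⁻¹`
satisfy `‖φ±(r'D₁ + sD₂) − φ±(rD₁ + sD₂)‖ ≤ |r − r'| / r` for `r, r', s > 0`; consequently
`(r,s) ↦ φ±(rD₁ + sD₂)` is continuous in operator norm on `(0,∞)²`. -/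
theorem resolvent_difference_estimate_and_continuity
    {A : Type*} [CStarAlgebra A]
    (D₁ D₂ : A) (h₁ : IsSelfAdjoint D₁) (h₂ : IsSelfAdjoint D₂)
    (hsq : ∀ r s : ℝ, (r • D₁ + s • D₂) ^ 2 = (r ^ 2) • D₁ ^ 2 + (s ^ 2) • D₂ ^ 2)
    (φ : ℂ → ℂ)
    (hφ : (∀ z, φ z = (z + Complex.I)⁻¹) ∨ (∀ z, φ z = (z - Complex.I)⁻¹)) :
    (∀ r r' s : ℝ, 0 < r → 0 < r' → 0 < s →
      ‖cfc φ (r' • D₁ + s • D₂) - cfc φ (r • D₁ + s • D₂)‖ ≤ |r - r'| / r) ∧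
    ContinuousOn (fun p : ℝ × ℝ => cfc φ (p.1 • D₁ + p.2 • D₂))
      (Set.Ioi (0 : ℝ) ×ˢ Set.Ioi (0 : ℝ)) := by
  obtain ⟨c, hcre, hcim, rfl⟩ :
      ∃ c : ℂ, c.re = 0 ∧ |c.im| = 1 ∧ φ = fun z => (z + c)⁻¹ := by
    rcases hφ with h | h
    · exact ⟨Complex.I, by simp, by simp, funext h⟩
    · exact ⟨-Complex.I, by simp, by simp,
        funext fun z => by rw [h z, sub_eq_add_neg]⟩
  letI := CStarAlgebra.spectralOrder A
  haveI := CStarAlgebra.spectralOrderedRing A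
  have hsq' : ∀ r s : ℝ, (r • D₂ + s • D₁) ^ 2 = (r ^ 2) • D₂ ^ 2 + (s ^ 2) • D₁ ^ 2 := by
    intro a b
    rw [add_comm, hsq b a, add_comm]
  refine ⟨fun r r' s hr hr' hs => main_est hcre hcim D₁ D₂ h₁ h₂ hsq hr hr' hs, ?_⟩
  intro p hp
  obtain ⟨hp1, hp2⟩ := hp
  simp only [Set.mem_Ioi] at hp1 hp2
  have hbound : ∀ q : ℝ × ℝ, q ∈ Set.Ioi (0:ℝ) ×ˢ Set.Ioi (0:ℝ) →
      ‖cfc (fun z : ℂ => (z + c)⁻¹) (q.1 • D₁ + q.2 • D₂)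
        - cfc (fun z : ℂ => (z + c)⁻¹) (p.1 • D₁ + p.2 • D₂)‖
      ≤ |p.1 - q.1| / p.1 + |p.2 - q.2| / p.2 := by
    rintro ⟨r, s⟩ ⟨hr, hs⟩
    simp only [Set.mem_Ioi] at hr hs
    have t1 : ‖cfc (fun z : ℂ => (z + c)⁻¹) (r • D₁ + s • D₂)
        - cfc (fun z : ℂ => (z + c)⁻¹) (p.1 • D₁ + s • D₂)‖ ≤ |p.1 - r| / p.1 :=
      main_est hcre hcim D₁ D₂ h₁ h₂ hsq hp1 hr hs
    have t2 : ‖cfc (fun z : ℂ => (z + c)⁻¹) (s • D₂ + p.1 • D₁)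
        - cfc (fun z : ℂ => (z + c)⁻¹) (p.2 • D₂ + p.1 • D₁)‖ ≤ |p.2 - s| / p.2 :=
      main_est hcre hcim D₂ D₁ h₂ h₁ hsq' hp2 hs hp1
    rw [add_comm (s • D₂), add_comm (p.2 • D₂)] at t2
    calc ‖cfc (fun z : ℂ => (z + c)⁻¹) (r • D₁ + s • D₂)
        - cfc (fun z : ℂ => (z + c)⁻¹) (p.1 • D₁ + p.2 • D₂)‖
        ≤ ‖cfc (fun z : ℂ => (z + c)⁻¹) (r • D₁ + s • D₂)
            - cfc (fun z : ℂ => (z + c)⁻¹) (p.1 • D₁ + s • D₂)‖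
          + ‖cfc (fun z : ℂ => (z + c)⁻¹) (p.1 • D₁ + s • D₂)
            - cfc (fun z : ℂ => (z + c)⁻¹) (p.1 • D₁ + p.2 • D₂)‖ := by
          exact norm_sub_le_norm_sub_add_norm_sub _ _ _
    _ ≤ |p.1 - r| / p.1 + |p.2 - s| / p.2 := add_le_add t1 t2
  rw [ContinuousWithinAt, ← tendsto_sub_nhds_zero_iff]
  apply squeeze_zero_norm'
  · filter_upwards [self_mem_nhdsWithin] with q hq
    exact hbound q hq
  · have hcont : Continuous fun q : ℝ × ℝ => |p.1 - q.1| / p.1 + |p.2 - q.2| / p.2 := by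
      fun_prop
    have h0 : (fun q : ℝ × ℝ => |p.1 - q.1| / p.1 + |p.2 - q.2| / p.2) p = 0 := by
      simp
    exact (hcont.tendsto' p 0 h0).mono_left nhdsWithin_le_nhds
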